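/- Let d ≥ 1 be an integer, let μ ∈ ℝ^d, set λ = Σ_{i=1}^d μ_i², and let χ = Σ_{i=1}^d (g_i + μ_i)² where g₁,…,g_d are independent standard real Gaussian random variables. Then for every real x with 0 ≤ x < d + λ, ℙ( χ ≤ x ) ≤ exp( −(d + λ − x)² / (4·(d + 2λ)) ). -/

import Mathlib

open MeasureTheory ProbabilityTheory Real
open scoped NNReal ENNReal

/-- `(1+u) * exp(u²/2 - u) ≥ 1` for `u ≥ 0`. -/
lemma aux_key_exp_ineq (u : ℝ) (hu : 0 ≤ u) : Real.exp (u - u ^ 2 / 2) ≤ 1 + u := by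
  have hmono : Monotone (fun u : ℝ => (1 + u) * Real.exp (u ^ 2 / 2 - u)) := by
    have hderiv : ∀ y : ℝ, HasDerivAt (fun u : ℝ => (1 + u) * Real.exp (u ^ 2 / 2 - u))
        (1 * Real.exp (y ^ 2 / 2 - y) + (1 + y) * ((y - 1) * Real.exp (y ^ 2 / 2 - y))) y := by
      intro y
      have h1 : HasDerivAt (fun u : ℝ => 1 + u) 1 y :=
        (hasDerivAt_id y).const_add 1
      have h2 : HasDerivAt (fun u : ℝ => u ^ 2 / 2 - u) (y - 1) y := by
        have := ((hasDerivAt_pow 2 y).div_const 2).sub (hasDerivAt_id' y)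
        exact this.congr_deriv (by norm_num)
      have h3 := h2.exp
      have := h1.mul h3
      exact this.congr_deriv (by ring)
    apply monotone_of_deriv_nonneg
    · intro y
      exact (hderiv y).differentiableAt
    · intro y
      rw [(hderiv y).deriv]
      nlinarith [Real.exp_pos (y ^ 2 / 2 - y), sq_nonneg y]
  have h0 := hmono hu
  simp only [add_zero, zero_pow, ne_eq, OfNat.ofNat_ne_zero, not_false_eq_true, zero_div,
    zero_sub, neg_zero, Real.exp_zero, mul_one] at h0
  -- h0 : 1 ≤ (1 + u) * exp (u^2/2 - u)
  have hE : Real.exp (u - u ^ 2 / 2) * Real.exp (u ^ 2 / 2 - u) = 1 := by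
    rw [← Real.exp_add]
    ring_nf
    exact Real.exp_zero
  nlinarith [Real.exp_pos (u ^ 2 / 2 - u), Real.exp_pos (u - u ^ 2 / 2)]

/-- Gaussian quadratic exponential moment. -/
lemma aux_gauss_quad (s m : ℝ) (hs : 0 < s) :
    ∫ y, Real.exp (-s * (y + m) ^ 2) ∂(gaussianReal 0 1)
      = (Real.sqrt (1 + 2 * s))⁻¹ * Real.exp (-s * m ^ 2 / (1 + 2 * s)) := by
  have h12s : (0:ℝ) < 1 + 2 * s := by linarith
  set a : ℝ := (1 + 2 * s) / 2 with ha
  have hapos : 0 < a := by positivity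
  set c : ℝ := 2 * s * m / (1 + 2 * s) with hc
  rw [gaussianReal_of_var_ne_zero _ one_ne_zero]
  have hgd : gaussianPDF 0 1 = fun x => ((Real.toNNReal (gaussianPDFReal 0 1 x) : ℝ≥0) : ℝ≥0∞) :=
    rfl
  rw [hgd, integral_withDensity_eq_integral_smul
    ((measurable_gaussianPDFReal 0 1).real_toNNReal) _]
  have hpt : ∀ x : ℝ, (Real.toNNReal (gaussianPDFReal 0 1 x) : ℝ≥0) • Real.exp (-s * (x + m) ^ 2)
      = ((Real.sqrt (2 * π))⁻¹ * Real.exp (-s * m ^ 2 / (1 + 2 * s))) * Real.exp (-a * (x + c) ^ 2) := by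
    intro x
    rw [NNReal.smul_def, Real.coe_toNNReal _ (gaussianPDFReal_nonneg 0 1 x)]
    simp only [gaussianPDFReal, NNReal.coe_one, mul_one, sub_zero, smul_eq_mul]
    rw [mul_assoc, ← Real.exp_add, mul_assoc, ← Real.exp_add]
    have hne : (1 + 2 * s) ≠ 0 := h12s.ne'
    congr 1
    rw [ha, hc]
    congr 1
    field_simp
    ring
  simp_rw [hpt]
  rw [integral_const_mul]
  have hshift : ∫ x : ℝ, Real.exp (-a * (x + c) ^ 2) = ∫ x : ℝ, Real.exp (-a * x ^ 2) :=
    integral_add_right_eq_self (fun x => Real.exp (-a * x ^ 2)) c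
  rw [hshift, integral_gaussian]
  have hsq : Real.sqrt (π / a) = Real.sqrt (2 * π) / Real.sqrt (1 + 2 * s) := by
    rw [← Real.sqrt_div (by positivity)]
    congr 1
    field_simp
    ring
  rw [hsq]
  have h2pi : Real.sqrt (2 * π) ≠ 0 := by positivity
  field_simp

/-- Per-coordinate mgf bound. -/
lemma aux_mgf_term_bound (s m : ℝ) (hs : 0 < s) :
    (Real.sqrt (1 + 2 * s))⁻¹ * Real.exp (-s * m ^ 2 / (1 + 2 * s))
      ≤ Real.exp (-s * (1 + m ^ 2) + s ^ 2 * (1 + 2 * m ^ 2)) := by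
  have h12s : (0:ℝ) < 1 + 2 * s := by linarith
  have h1 : (Real.sqrt (1 + 2 * s))⁻¹ ≤ Real.exp (-s + s ^ 2) := by
    have h2 : Real.exp (s - s ^ 2) ≤ Real.sqrt (1 + 2 * s) := by
      rw [Real.le_sqrt (Real.exp_pos _).le (by positivity)]
      have := aux_key_exp_ineq (2 * s) (by linarith)
      calc Real.exp (s - s ^ 2) ^ 2 = Real.exp (2 * s - (2 * s) ^ 2 / 2) := by
            rw [← Real.exp_nat_mul]
            congr 1
            ring
        _ ≤ 1 + 2 * s := this
    calc (Real.sqrt (1 + 2 * s))⁻¹ ≤ (Real.exp (s - s ^ 2))⁻¹ :=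
          inv_anti₀ (Real.exp_pos _) h2
      _ = Real.exp (-s + s ^ 2) := by rw [← Real.exp_neg]; congr 1; ring
  have h2 : Real.exp (-s * m ^ 2 / (1 + 2 * s)) ≤ Real.exp (-s * m ^ 2 + 2 * s ^ 2 * m ^ 2) := by
    rw [Real.exp_le_exp, div_le_iff₀ h12s]
    nlinarith [sq_nonneg m, sq_nonneg s, mul_pos hs hs, mul_nonneg (mul_nonneg hs.le hs.le) (mul_nonneg hs.le (sq_nonneg m))]
  calc (Real.sqrt (1 + 2 * s))⁻¹ * Real.exp (-s * m ^ 2 / (1 + 2 * s))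
      ≤ Real.exp (-s + s ^ 2) * Real.exp (-s * m ^ 2 + 2 * s ^ 2 * m ^ 2) :=
        mul_le_mul h1 h2 (Real.exp_pos _).le (Real.exp_pos _).le
    _ = Real.exp (-s * (1 + m ^ 2) + s ^ 2 * (1 + 2 * m ^ 2)) := by
        rw [← Real.exp_add]; congr 1; ring

theorem stmt_13 (d : ℕ) (hd : 1 ≤ d) (μ : Fin d → ℝ) (lam : ℝ)
    (hlam : lam = ∑ i, μ i ^ 2)
    {Ω : Type*} [MeasureSpace Ω] [IsProbabilityMeasure (ℙ : Measure Ω)]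
    (g : Fin d → Ω → ℝ) (hmg : ∀ i, Measurable (g i))
    (hindep : iIndepFun g ℙ)
    (hg : ∀ i, Measure.map (g i) ℙ = gaussianReal 0 1)
    (x : ℝ) (hx0 : 0 ≤ x) (hx : x < (d : ℝ) + lam) :
    ℙ {ω | (∑ i, (g i ω + μ i) ^ 2) ≤ x} ≤
      ENNReal.ofReal (Real.exp (-((d : ℝ) + lam - x) ^ 2 / (4 * ((d : ℝ) + 2 * lam)))) := by
  classical
  set X : Fin d → Ω → ℝ := fun i ω => (g i ω + μ i) ^ 2 with hX
  have hmX : ∀ i, Measurable (X i) := fun i => ((hmg i).add_const _).pow_const 2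
  have hlam0 : 0 ≤ lam := hlam ▸ Finset.sum_nonneg fun i _ => sq_nonneg _
  have hd1 : (1:ℝ) ≤ (d:ℝ) := by exact_mod_cast hd
  set A : ℝ := (d : ℝ) + lam - x with hA
  set B : ℝ := (d : ℝ) + 2 * lam with hB
  have hApos : 0 < A := by rw [hA]; linarith
  have hBpos : 0 < B := by rw [hB]; linarith
  set s : ℝ := A / (2 * B) with hs_def
  have hs : 0 < s := div_pos hApos (by linarith)
  have hindepX : iIndepFun X ℙ :=
    hindep.comp (fun i y => (y + μ i) ^ 2) (fun i => (measurable_id.add_const _).pow_const 2)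
  -- integrability of exp(-s * X i)
  have hint : ∀ i, Integrable (fun ω => Real.exp (-s * X i ω)) ℙ := by
    intro i
    refine Integrable.mono' (integrable_const 1)
      (((hmX i).const_mul (-s)).exp).aestronglyMeasurable
      (ae_of_all _ fun ω => ?_)
    rw [Real.norm_eq_abs, abs_of_pos (Real.exp_pos _), ← Real.exp_zero]
    apply Real.exp_le_exp.mpr
    have : 0 ≤ X i ω := sq_nonneg _
    nlinarith
  -- integrability of exp(-s * ∑ X i)
  have hintS : Integrable (fun ω => Real.exp (-s * (∑ i, X i) ω)) ℙ := by
    have he : (fun ω => Real.exp (-s * (∑ i, X i) ω))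
        = fun ω => Real.exp (-s * ∑ i, X i ω) := by
      funext ω; rw [Finset.sum_apply]
    rw [he]
    refine Integrable.mono' (integrable_const 1)
      ((((Finset.measurable_sum Finset.univ fun i _ => hmX i)).const_mul (-s)).exp).aestronglyMeasurable
      (ae_of_all _ fun ω => ?_)
    rw [Real.norm_eq_abs, abs_of_pos (Real.exp_pos _), ← Real.exp_zero]
    apply Real.exp_le_exp.mpr
    have h0 : 0 ≤ ∑ i, X i ω := Finset.sum_nonneg fun i _ => sq_nonneg _
    nlinarith
  -- per-coordinate mgf
  have hmgf : ∀ i, mgf (X i) ℙ (-s)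
      = (Real.sqrt (1 + 2 * s))⁻¹ * Real.exp (-s * μ i ^ 2 / (1 + 2 * s)) := by
    intro i
    have hmeas : AEStronglyMeasurable (fun y : ℝ => Real.exp (-s * (y + μ i) ^ 2))
        (Measure.map (g i) ℙ) :=
      (((measurable_id.add_const _).pow_const 2).const_mul (-s)).exp.aestronglyMeasurable
    calc mgf (X i) ℙ (-s) = ∫ ω, Real.exp (-s * (g i ω + μ i) ^ 2) ∂ℙ := rfl
      _ = ∫ y, Real.exp (-s * (y + μ i) ^ 2) ∂(Measure.map (g i) ℙ) :=
        (integral_map (hmg i).aemeasurable hmeas).symm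
      _ = ∫ y, Real.exp (-s * (y + μ i) ^ 2) ∂(gaussianReal 0 1) := by rw [hg i]
      _ = (Real.sqrt (1 + 2 * s))⁻¹ * Real.exp (-s * μ i ^ 2 / (1 + 2 * s)) :=
        aux_gauss_quad s (μ i) hs
  -- Chernoff bound
  have hcher := measure_le_le_exp_mul_mgf (μ := ℙ) (X := ∑ i, X i) (t := -s) x
    (neg_nonpos.mpr hs.le) hintS
  rw [hindepX.mgf_sum hmX Finset.univ] at hcher
  -- bound the product of mgfs
  have hprod : ∏ i, mgf (X i) ℙ (-s) ≤ Real.exp (-s * ((d:ℝ) + lam) + s ^ 2 * ((d:ℝ) + 2 * lam)) := by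
    calc ∏ i, mgf (X i) ℙ (-s)
        ≤ ∏ i, Real.exp (-s * (1 + μ i ^ 2) + s ^ 2 * (1 + 2 * μ i ^ 2)) := by
          refine Finset.prod_le_prod (fun i _ => ?_) (fun i _ => ?_)
          · rw [hmgf i]; positivity
          · rw [hmgf i]; exact aux_mgf_term_bound s (μ i) hs
      _ = Real.exp (∑ i, (-s * (1 + μ i ^ 2) + s ^ 2 * (1 + 2 * μ i ^ 2))) :=
          (Real.exp_sum _ _).symm
      _ = Real.exp (-s * ((d:ℝ) + lam) + s ^ 2 * ((d:ℝ) + 2 * lam)) := by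
          congr 1
          rw [hlam]
          have hterm : ∀ m : ℝ, -s * (1 + m ^ 2) + s ^ 2 * (1 + 2 * m ^ 2)
              = (-s + s ^ 2) + (-s + 2 * s ^ 2) * m ^ 2 := by intro m; ring
          simp_rw [hterm]
          rw [Finset.sum_add_distrib, Finset.sum_const, ← Finset.mul_sum, Finset.card_univ,
            Fintype.card_fin, nsmul_eq_mul]
          ring
  -- final real bound
  have hfinal : Real.exp (-(-s) * x) * Real.exp (-s * ((d:ℝ) + lam) + s ^ 2 * ((d:ℝ) + 2 * lam))
      = Real.exp (-A ^ 2 / (4 * B)) := by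
    rw [← Real.exp_add]
    congr 1
    rw [hs_def, hA, hB]
    have hBne : ((d:ℝ) + 2 * lam) ≠ 0 := by rw [hB] at hBpos; exact hBpos.ne'
    field_simp
    ring
  have htoReal : (ℙ {ω | (∑ i, X i) ω ≤ x}).toReal ≤ Real.exp (-A ^ 2 / (4 * B)) := by
    refine hcher.trans ?_
    rw [← hfinal]
    exact mul_le_mul_of_nonneg_left hprod (Real.exp_pos _).le
  have hsetEq : {ω | (∑ i, (g i ω + μ i) ^ 2) ≤ x} = {ω | (∑ i, X i) ω ≤ x} := by
    ext ω
    simp [hX, Finset.sum_apply]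
  rw [hsetEq]
  have hne : ℙ {ω | (∑ i, X i) ω ≤ x} ≠ ⊤ := measure_ne_top _ _
  rw [← ENNReal.ofReal_toReal hne]
  exact ENNReal.ofReal_le_ofReal htoReal
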